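/- Let u, k : [0,∞)² → ℝ be continuous nonnegative and c ≥ 0. If u(t₁,t₂) ≤ c + ∫₀^{t₁}∫₀^{t₂} k(s₁,s₂)·u(s₁,s₂) ds₂ ds₁ for all t₁,t₂ ≥ 0, then u(t₁,t₂) ≤ c·exp(∫₀^{t₁}∫₀^{t₂} k(s₁,s₂) ds₂ ds₁) for all t₁,t₂ ≥ 0. -/

import Mathlib

open intervalIntegral Set MeasureTheory

lemma wendroff_aux
    (u k : ℝ → ℝ → ℝ) (c : ℝ) (hc : 0 ≤ c)
    (hu : Continuous (fun w : ℝ × ℝ => u w.1 w.2))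
    (hk : Continuous (fun w : ℝ × ℝ => k w.1 w.2))
    (hu0 : ∀ t₁ t₂ : ℝ, 0 ≤ u t₁ t₂)
    (hk0 : ∀ t₁ t₂ : ℝ, 0 ≤ k t₁ t₂)
    (hineq : ∀ t₁ t₂ : ℝ, 0 ≤ t₁ → 0 ≤ t₂ →
      u t₁ t₂ ≤ c + ∫ s₁ in (0:ℝ)..t₁, ∫ s₂ in (0:ℝ)..t₂, k s₁ s₂ * u s₁ s₂) :
    ∀ t₁ t₂ : ℝ, 0 ≤ t₁ → 0 ≤ t₂ →
      u t₁ t₂ ≤ c * Real.exp (∫ s₁ in (0:ℝ)..t₁, ∫ s₂ in (0:ℝ)..t₂, k s₁ s₂) := by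
  intro t₁ t₂ ht₁ ht₂
  -- inner integrals as functions of the first variable
  set g : ℝ → ℝ := fun s => ∫ y in (0:ℝ)..t₂, k s y * u s y with hgdef
  set K : ℝ → ℝ := fun s => ∫ y in (0:ℝ)..t₂, k s y with hKdef
  have hku : Continuous (Function.uncurry fun s y => k s y * u s y) := hk.mul hu
  have hg_cont : Continuous g :=
    continuous_parametric_intervalIntegral_of_continuous hku continuous_const
  have hK_cont : Continuous K :=
    continuous_parametric_intervalIntegral_of_continuous hk continuous_const
  set v : ℝ → ℝ := fun t => c + ∫ s in (0:ℝ)..t, g s with hvdef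
  have hv_deriv : ∀ t : ℝ, HasDerivAt v (g t) t := by
    intro t
    exact (intervalIntegral.integral_hasDerivAt_right
      (hg_cont.intervalIntegrable _ _)
      (hg_cont.stronglyMeasurableAtFilter _ _) hg_cont.continuousAt).const_add c
  set I : ℝ → ℝ := fun t => ∫ s in (0:ℝ)..t, K s with hIdef
  have hI_deriv : ∀ t : ℝ, HasDerivAt I (K t) t := by
    intro t
    exact intervalIntegral.integral_hasDerivAt_right
      (hK_cont.intervalIntegrable _ _)
      (hK_cont.stronglyMeasurableAtFilter _ _) hK_cont.continuousAt
  -- u t y ≤ v t for 0 ≤ t, 0 ≤ y ≤ t₂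
  have hub : ∀ t y : ℝ, 0 ≤ t → y ∈ Icc (0:ℝ) t₂ → u t y ≤ v t := by
    intro t y ht hy
    refine (hineq t y ht hy.1).trans ?_
    have : (∫ s₁ in (0:ℝ)..t, ∫ s₂ in (0:ℝ)..y, k s₁ s₂ * u s₁ s₂) ≤
        ∫ s₁ in (0:ℝ)..t, g s₁ := by
      apply intervalIntegral.integral_mono_on ht
      · exact (continuous_parametric_intervalIntegral_of_continuous hku
          continuous_const).intervalIntegrable _ _
      · exact hg_cont.intervalIntegrable _ _
      · intro s hs
        apply intervalIntegral.integral_mono_interval le_rfl hy.1 hy.2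
        · filter_upwards with z
          by_cases hz : 0 ≤ z
          · exact mul_nonneg (hk0 _ _) (hu0 _ _)
          · exact mul_nonneg (hk0 _ _) (hu0 _ _)
        · exact (Continuous.intervalIntegrable (by fun_prop) _ _)
    simp only [hvdef]
    linarith
  have hg_nonneg : ∀ t : ℝ, 0 ≤ g t := by
    intro t
    exact intervalIntegral.integral_nonneg ht₂ fun y _ => mul_nonneg (hk0 _ _) (hu0 _ _)
  have hK_nonneg : ∀ t : ℝ, 0 ≤ K t :=
    fun t => intervalIntegral.integral_nonneg ht₂ fun y _ => hk0 _ _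
  have hv_nonneg : ∀ t : ℝ, 0 ≤ t → 0 ≤ v t := by
    intro t ht
    have : 0 ≤ ∫ s in (0:ℝ)..t, g s :=
      intervalIntegral.integral_nonneg ht fun s _ => hg_nonneg s
    simp only [hvdef]; linarith
  -- key differential inequality
  have hkey : ∀ t : ℝ, 0 ≤ t → g t ≤ K t * v t := by
    intro t ht
    have h1 : g t ≤ ∫ y in (0:ℝ)..t₂, k t y * v t := by
      apply intervalIntegral.integral_mono_on ht₂
      · exact Continuous.intervalIntegrable (by fun_prop) _ _
      · exact Continuous.intervalIntegrable (by fun_prop) _ _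
      · intro y hy
        exact mul_le_mul_of_nonneg_left (hub t y ht hy) (hk0 _ _)
    have h2 : (∫ y in (0:ℝ)..t₂, k t y * v t) = K t * v t := by
      rw [intervalIntegral.integral_mul_const]
    linarith
  -- multiplier function
  set φ : ℝ → ℝ := fun t => v t * Real.exp (-(I t)) with hφdef
  have hφ_deriv : ∀ t : ℝ, HasDerivAt φ
      (g t * Real.exp (-(I t)) + v t * (Real.exp (-(I t)) * (-(K t)))) t := by
    intro t
    exact (hv_deriv t).mul (((hI_deriv t).neg).exp)
  have hanti : AntitoneOn φ (Icc 0 t₁) := by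
    apply antitoneOn_of_deriv_nonpos (convex_Icc _ _)
    · exact fun x _ => ((hφ_deriv x).differentiableAt).continuousAt.continuousWithinAt
    · intro x _
      exact (hφ_deriv x).differentiableAt.differentiableWithinAt
    · intro x hx
      rw [interior_Icc] at hx
      rw [(hφ_deriv x).deriv]
      have hx0 : 0 ≤ x := le_of_lt hx.1
      have := hkey x hx0
      have hexp : 0 ≤ Real.exp (-(I x)) := (Real.exp_pos _).le
      nlinarith [hexp, this]
  have h0 : φ t₁ ≤ φ 0 := hanti ⟨le_rfl, ht₁⟩ ⟨ht₁, le_rfl⟩ ht₁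
  have hφ0 : φ 0 = c := by
    simp [hφdef, hvdef, hIdef]
  have hvt₁ : v t₁ ≤ c * Real.exp (I t₁) := by
    have hexp : (0:ℝ) < Real.exp (-(I t₁)) := Real.exp_pos _
    rw [hφ0] at h0
    have := mul_le_mul_of_nonneg_right h0 (Real.exp_pos (I t₁)).le
    rwa [mul_assoc, ← Real.exp_add, neg_add_cancel, Real.exp_zero, mul_one] at this
  exact le_trans (hub t₁ t₂ ht₁ ⟨ht₂, le_rfl⟩) hvt₁
theorem wendroff_real
    (u k : ℝ → ℝ → ℝ) (c : ℝ) (hc : 0 ≤ c)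
    (hu : ContinuousOn (fun w : ℝ × ℝ => u w.1 w.2) (Ici 0 ×ˢ Ici 0))
    (hk : ContinuousOn (fun w : ℝ × ℝ => k w.1 w.2) (Ici 0 ×ˢ Ici 0))
    (hu0 : ∀ t₁ t₂ : ℝ, 0 ≤ t₁ → 0 ≤ t₂ → 0 ≤ u t₁ t₂)
    (hk0 : ∀ t₁ t₂ : ℝ, 0 ≤ t₁ → 0 ≤ t₂ → 0 ≤ k t₁ t₂)
    (hineq : ∀ t₁ t₂ : ℝ, 0 ≤ t₁ → 0 ≤ t₂ →
      u t₁ t₂ ≤ c + ∫ s₁ in (0:ℝ)..t₁, ∫ s₂ in (0:ℝ)..t₂, k s₁ s₂ * u s₁ s₂) :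
    ∀ t₁ t₂ : ℝ, 0 ≤ t₁ → 0 ≤ t₂ →
      u t₁ t₂ ≤ c * Real.exp (∫ s₁ in (0:ℝ)..t₁, ∫ s₂ in (0:ℝ)..t₂, k s₁ s₂) := by
  set U : ℝ → ℝ → ℝ := fun x y => u (max x 0) (max y 0) with hUdef
  set Kk : ℝ → ℝ → ℝ := fun x y => k (max x 0) (max y 0) with hKdef
  have hmap : Continuous fun w : ℝ × ℝ => ((max w.1 0, max w.2 0) : ℝ × ℝ) := by fun_prop
  have hmem : ∀ w : ℝ × ℝ, ((max w.1 0, max w.2 0) : ℝ × ℝ) ∈ Ici (0:ℝ) ×ˢ Ici (0:ℝ) :=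
    fun w => ⟨le_max_right w.1 0, le_max_right w.2 0⟩
  have hUc : Continuous (fun w : ℝ × ℝ => U w.1 w.2) :=
    hu.comp_continuous hmap hmem
  have hKc : Continuous (fun w : ℝ × ℝ => Kk w.1 w.2) :=
    hk.comp_continuous hmap hmem
  have hUeq : ∀ x y : ℝ, 0 ≤ x → 0 ≤ y → U x y = u x y := by
    intro x y hx hy; simp [hUdef, max_eq_left hx, max_eq_left hy]
  have hKeq : ∀ x y : ℝ, 0 ≤ x → 0 ≤ y → Kk x y = k x y := by
    intro x y hx hy; simp [hKdef, max_eq_left hx, max_eq_left hy]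
  have hU0 : ∀ x y : ℝ, 0 ≤ U x y := fun x y =>
    hu0 _ _ (le_max_right _ _) (le_max_right _ _)
  have hK0 : ∀ x y : ℝ, 0 ≤ Kk x y := fun x y =>
    hk0 _ _ (le_max_right _ _) (le_max_right _ _)
  -- double integrals agree on nonnegative rectangles
  have hdbl : ∀ (f F : ℝ → ℝ → ℝ), (∀ x y : ℝ, 0 ≤ x → 0 ≤ y → F x y = f x y) →
      ∀ t₁ t₂ : ℝ, 0 ≤ t₁ → 0 ≤ t₂ →
      (∫ s₁ in (0:ℝ)..t₁, ∫ s₂ in (0:ℝ)..t₂, F s₁ s₂) =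
      ∫ s₁ in (0:ℝ)..t₁, ∫ s₂ in (0:ℝ)..t₂, f s₁ s₂ := by
    intro f F hFf t₁ t₂ ht₁ ht₂
    apply intervalIntegral.integral_congr
    intro s₁ hs₁
    rw [uIcc_of_le ht₁] at hs₁
    apply intervalIntegral.integral_congr
    intro s₂ hs₂
    rw [uIcc_of_le ht₂] at hs₂
    exact hFf _ _ hs₁.1 hs₂.1
  have hineq' : ∀ t₁ t₂ : ℝ, 0 ≤ t₁ → 0 ≤ t₂ →
      U t₁ t₂ ≤ c + ∫ s₁ in (0:ℝ)..t₁, ∫ s₂ in (0:ℝ)..t₂, Kk s₁ s₂ * U s₁ s₂ := by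
    intro t₁ t₂ ht₁ ht₂
    rw [hUeq _ _ ht₁ ht₂,
      hdbl (fun x y => k x y * u x y) (fun x y => Kk x y * U x y)
        (fun x y hx hy => by rw [hUeq _ _ hx hy, hKeq _ _ hx hy]) t₁ t₂ ht₁ ht₂]
    exact hineq t₁ t₂ ht₁ ht₂
  intro t₁ t₂ ht₁ ht₂
  have := wendroff_aux U Kk c hc hUc hKc hU0 hK0 hineq' t₁ t₂ ht₁ ht₂
  rwa [hUeq _ _ ht₁ ht₂, hdbl k Kk hKeq t₁ t₂ ht₁ ht₂] at this
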